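/- For all 1 ≤ i,j ≤ m+n and 1 ≤ c ≤ ℓ−1, the following two elements of U lie in the left ideal I_χ: (i) t_{ij}(e_{c+1,c}) − δ_{ij}, and (ii) t_{ij}(e_{c+1,c}⊗e_{c+1,c+1}) + ρ_{c+1}·t_{ij}(e_{c+1,c}) − t_{ij}(e_{c+1,c+1}) − δ_{ij}ρ_c. Equivalently, t_{ij}(e_{c+1,c}(u+e_{c+1,c+1}+ρ_{c+1})) − t_{ij}(u+e_{c+1,c+1}+ρ_c) ≡ 0 modulo I_χ[u], where u is a polynomial variable. -/

import Mathlib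

open scoped BigOperators Classical

noncomputable section

abbrev Box (m n ℓ : ℕ) := Fin (m + n) × Fin ℓ

/-- The sign `(-1)^ε` for `ε ∈ ℤ/2ℤ`. -/
def sgn (ε : ZMod 2) : ℂ := if ε = 0 then 1 else -1

/-- The defining super-commutation relations of `U(gl_{mℓ|nℓ})` on the free
algebra generated by the symbols `E_{a,b}`, `a, b ∈ J`. -/
inductive SRel (m n ℓ : ℕ) (p : Fin (m + n) → ZMod 2) :
    FreeAlgebra ℂ (Box m n ℓ × Box m n ℓ) →
    FreeAlgebra ℂ (Box m n ℓ × Box m n ℓ) → Prop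
  | super (a b c d : Box m n ℓ) :
      SRel m n ℓ p (FreeAlgebra.ι ℂ (a, b) * FreeAlgebra.ι ℂ (c, d))
        (sgn ((p a.1 + p b.1) * (p c.1 + p d.1)) •
            (FreeAlgebra.ι ℂ (c, d) * FreeAlgebra.ι ℂ (a, b)) +
          (if b = c then FreeAlgebra.ι ℂ (a, d) else 0) -
          sgn ((p a.1 + p b.1) * (p c.1 + p d.1)) •
            (if a = d then FreeAlgebra.ι ℂ (c, b) else 0))

/-- The universal enveloping superalgebra `U = U(gl_{mℓ|nℓ})`. -/
abbrev U (m n ℓ : ℕ) (p : Fin (m + n) → ZMod 2) := RingQuot (SRel m n ℓ p)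

/-- The generator `E_{a,b}` of `U`. -/
def gen (m n ℓ : ℕ) (p : Fin (m + n) → ZMod 2) (a b : Box m n ℓ) : U m n ℓ p :=
  RingQuot.mkAlgHom ℂ (SRel m n ℓ p) (FreeAlgebra.ι ℂ (a, b))

/-- `χ(E_{a,b}) = (-1)^{p(a)}` if `row(a) = row(b)`, `col(a) = col(b) + 1`, else `0`. -/
def chiv (m n ℓ : ℕ) (p : Fin (m + n) → ZMod 2) (a b : Box m n ℓ) : ℂ :=
  if a.1 = b.1 ∧ (a.2 : ℕ) = (b.2 : ℕ) + 1 then sgn (p a.1) else 0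

/-- The left ideal `I_χ` of `U` generated by the elements `E_{a,b} - χ(E_{a,b})`
over boxes with `col(a) > col(b)`. -/
def Ichi (m n ℓ : ℕ) (p : Fin (m + n) → ZMod 2) : Ideal (U m n ℓ p) :=
  Ideal.span {u : U m n ℓ p | ∃ a b : Box m n ℓ, (b.2 : ℕ) < (a.2 : ℕ) ∧
    u = gen m n ℓ p a b - algebraMap ℂ (U m n ℓ p) (chiv m n ℓ p a b)}

/-- `ρ_r = -(ℓ-r)(m-n)`, with `c : Fin ℓ` the 0-based column (so `r = c+1`). -/
def ρC (m n ℓ : ℕ) (c : Fin ℓ) : ℂ :=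
  -(((ℓ : ℂ) - ((c : ℕ) + 1)) * ((m : ℂ) - (n : ℂ)))

/-- `Ẽ_{a,b} = (-1)^{col(b)-col(a)} (E_{a,b} + δ_{a,b} (-1)^{p(a)} ρ_{col(a)} 1)`. -/
def EtilU (m n ℓ : ℕ) (p : Fin (m + n) → ZMod 2) (a b : Box m n ℓ) : U m n ℓ p :=
  ((-1 : ℂ) ^ ((a.2 : ℕ) + (b.2 : ℕ))) •
    (gen m n ℓ p a b +
      (if a = b then sgn (p a.1) * ρC m n ℓ a.2 else 0) • (1 : U m n ℓ p))


/-- The matrix of maps `t_{ij}` on `Mat_ℓ(ℂ)`: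
`t_{ij}(x) = (-1)^{p(i)} Σ_{a,b} x_{a,b} E_{i⋆a,j⋆b}` (linear extension to
`Mat_ℓ(ℂ)` of `t_{ij}(e_{a,b}) = (-1)^{p(i)} E_{i⋆a,j⋆b}`). -/
def tMat (m n ℓ : ℕ) (p : Fin (m + n) → ZMod 2) :
    Matrix (Fin ℓ) (Fin ℓ) ℂ →ₗ[ℂ]
      Matrix (Fin (m + n)) (Fin (m + n)) (U m n ℓ p) where
  toFun x := Matrix.of fun i j =>
    sgn (p i) • ∑ a : Fin ℓ, ∑ b : Fin ℓ, x a b • gen m n ℓ p (i, a) (j, b)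
  map_add' x y := by
    ext i j
    simp [Matrix.add_apply, add_smul, Finset.sum_add_distrib, smul_add]
  map_smul' c x := by
    ext i j
    simp only [Matrix.smul_apply, smul_eq_mul, mul_smul, ← Finset.smul_sum,
      Matrix.of_apply, RingHom.id_apply]
    rw [smul_comm]

/-- The algebra homomorphism `Φ : T(Mat_ℓ(ℂ)) → Mat_{m+n}(U)` extending the
maps `t_{ij}`; by definition of `t_{ij}` on tensors,
`t_{ij}(x_1 ⊗ ⋯ ⊗ x_r) = (Φ(x_1 ⊗ ⋯ ⊗ x_r))_{ij}`. -/
def Phi (m n ℓ : ℕ) (p : Fin (m + n) → ZMod 2) :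
    TensorAlgebra ℂ (Matrix (Fin ℓ) (Fin ℓ) ℂ) →ₐ[ℂ]
      Matrix (Fin (m + n)) (Fin (m + n)) (U m n ℓ p) :=
  TensorAlgebra.lift ℂ (tMat m n ℓ p)

set_option maxRecDepth 8000

lemma sgn_add (a b : ZMod 2) : sgn (a + b) = sgn a * sgn b := by
  have h : ∀ c : ZMod 2, c = 0 ∨ c = 1 := by decide
  rcases h a with ha | ha <;> rcases h b with hb | hb <;>
    subst ha <;> subst hb <;>
    simp [sgn, show (1 + 1 : ZMod 2) = 0 from by decide,
      show (1 : ZMod 2) ≠ 0 from by decide]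

lemma sgn_mul_self (a : ZMod 2) : sgn a * sgn a = 1 := by
  unfold sgn; split <;> norm_num

lemma zmod2_mul_self (a : ZMod 2) : a * a = a := by
  have h : ∀ c : ZMod 2, c = 0 ∨ c = 1 := by decide
  rcases h a with ha | ha <;> subst ha <;> decide

lemma zmod2_add_self (a : ZMod 2) : a + a = 0 := by
  have h : ∀ c : ZMod 2, c = 0 ∨ c = 1 := by decide
  rcases h a with ha | ha <;> subst ha <;> decide

variable (m n ℓ : ℕ) (p : Fin (m + n) → ZMod 2)

lemma gen_rel (a b c d : Box m n ℓ) :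
    gen m n ℓ p a b * gen m n ℓ p c d =
      sgn ((p a.1 + p b.1) * (p c.1 + p d.1)) • (gen m n ℓ p c d * gen m n ℓ p a b) +
      (if b = c then gen m n ℓ p a d else 0) -
      sgn ((p a.1 + p b.1) * (p c.1 + p d.1)) • (if a = d then gen m n ℓ p c b else 0) := by
  have h := RingQuot.mkAlgHom_rel ℂ (SRel.super (m := m) (n := n) (ℓ := ℓ) (p := p) a b c d)
  simp only [map_mul, map_add, map_sub, map_smul,
    apply_ite (RingQuot.mkAlgHom ℂ (SRel m n ℓ p)), map_zero] at h
  unfold gen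
  exact h

lemma gen_mem (a b : Box m n ℓ) (h : (b.2 : ℕ) < (a.2 : ℕ)) :
    gen m n ℓ p a b - algebraMap ℂ (U m n ℓ p) (chiv m n ℓ p a b) ∈ Ichi m n ℓ p :=
  Ideal.subset_span ⟨a, b, h, rfl⟩

lemma csmul_mem (c : ℂ) {x : U m n ℓ p} (hx : x ∈ Ichi m n ℓ p) :
    c • x ∈ Ichi m n ℓ p := by
  rw [Algebra.smul_def]; exact Ideal.mul_mem_left _ _ hx

lemma tMat_std (i j : Fin (m + n)) (a b : Fin ℓ) :
    tMat m n ℓ p (Matrix.single a b 1) i j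
      = sgn (p i) • gen m n ℓ p (i, a) (j, b) := by
  show sgn (p i) • ∑ a' : Fin ℓ, ∑ b' : Fin ℓ,
      Matrix.single a b 1 a' b' • gen m n ℓ p (i, a') (j, b') = _
  congr 1
  rw [Finset.sum_eq_single a, Finset.sum_eq_single b]
  · simp [Matrix.single]
  · intro c _ hc; simp [Matrix.single, hc.symm]
  · simp
  · intro c _ hc
    apply Finset.sum_eq_zero
    intro e _; simp [Matrix.single, hc.symm]
  · simp

lemma sum_sgn (hp : (Finset.univ.filter fun i => p i = 0).card = m) :
    ∑ k : Fin (m + n), sgn (p k) = (m : ℂ) - (n : ℂ) := by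
  classical
  rw [← Finset.sum_filter_add_sum_filter_not Finset.univ (fun k => p k = 0)]
  have h2 : (Finset.univ.filter fun k => ¬ p k = 0).card = n := by
    have h3 := Finset.card_filter_add_card_filter_not
      (s := (Finset.univ : Finset (Fin (m+n)))) (p := fun k => p k = 0)
    simp only [Finset.card_univ, Fintype.card_fin] at h3
    omega
  have e1 : ∑ x ∈ Finset.univ.filter (fun k => p k = 0), sgn (p x)
      = ∑ _x ∈ Finset.univ.filter (fun k => p k = 0), (1 : ℂ) :=
    Finset.sum_congr rfl fun x hx => by
      simp [sgn, (Finset.mem_filter.mp hx).2]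
  have e2 : ∑ x ∈ Finset.univ.filter (fun k => ¬ p k = 0), sgn (p x)
      = ∑ _x ∈ Finset.univ.filter (fun k => ¬ p k = 0), (-1 : ℂ) :=
    Finset.sum_congr rfl fun x hx => by
      simp [sgn, (Finset.mem_filter.mp hx).2]
  rw [e1, e2, Finset.sum_const, Finset.sum_const, hp, h2]
  simp; ring

lemma sgn_zero : sgn 0 = 1 := by simp [sgn]
lemma sgn_one : sgn 1 = -1 := by simp [sgn, show (1 : ZMod 2) ≠ 0 from by decide]

/-- per-k identity -/
lemma hk_lemma (i j : Fin (m+n)) (d : Fin ℓ) (hd : (d:ℕ)+1 < ℓ) (k : Fin (m+n)) :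
    (sgn (p i) • gen m n ℓ p (i, ⟨(d:ℕ)+1, hd⟩) (k, d)) *
      (sgn (p k) • gen m n ℓ p (k, ⟨(d:ℕ)+1, hd⟩) (j, ⟨(d:ℕ)+1, hd⟩))
    = (sgn (p i) * sgn (p k) * sgn ((p i + p k) * (p k + p j))) •
        (gen m n ℓ p (k, ⟨(d:ℕ)+1, hd⟩) (j, ⟨(d:ℕ)+1, hd⟩) *
          (gen m n ℓ p (i, ⟨(d:ℕ)+1, hd⟩) (k, d)
            - algebraMap ℂ (U m n ℓ p) (chiv m n ℓ p (i, ⟨(d:ℕ)+1, hd⟩) (k, d))))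
      - (if i = j then (sgn (p i) * sgn (p k) * sgn ((p i + p k) * (p k + p j))) •
          (gen m n ℓ p (k, ⟨(d:ℕ)+1, hd⟩) (k, d)
            - algebraMap ℂ (U m n ℓ p) (chiv m n ℓ p (k, ⟨(d:ℕ)+1, hd⟩) (k, d))) else 0)
      + (if i = k then sgn (p i) • gen m n ℓ p (k, ⟨(d:ℕ)+1, hd⟩) (j, ⟨(d:ℕ)+1, hd⟩) else 0)
      - (if i = j then sgn (p k) • (1 : U m n ℓ p) else 0) := by
  set d1 : Fin ℓ := ⟨(d:ℕ)+1, hd⟩ with hd1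
  have hne : ((k, d) : Box m n ℓ) ≠ (k, d1) := by
    simp [Prod.ext_iff, Fin.ext_iff, hd1]
  have had : (((i, d1) : Box m n ℓ) = (j, d1)) ↔ i = j := by
    simp [Prod.ext_iff]
  have hχ1 : chiv m n ℓ p (i, d1) (k, d) = if i = k then sgn (p i) else 0 := by
    simp [chiv, hd1]
  have hχ3 : chiv m n ℓ p (k, d1) (k, d) = sgn (p k) := by
    simp [chiv, hd1]
  rw [smul_mul_smul, gen_rel m n ℓ p (i, d1) (k, d) (k, d1) (j, d1), if_neg hne,
    hχ1, hχ3]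
  simp only [had, add_zero]
  rw [mul_sub]
  have hcomm : ∀ (c : ℂ) (x : U m n ℓ p), x * algebraMap ℂ (U m n ℓ p) c = c • x := by
    intro c x; rw [← Algebra.commutes, ← Algebra.smul_def]
  rw [hcomm]
  have h2 : ∀ c : ZMod 2, c = 0 ∨ c = 1 := by decide
  have e11 : (1 + 1 : ZMod 2) = 0 := by decide
  have norm : ∀ x : ZMod 2, sgn ((x + x) * (x + x)) = 1 := by
    intro x; rw [zmod2_add_self]; simp [sgn]
  by_cases hij : i = j
  · subst hij
    by_cases hik : i = k
    · subst hik
      simp only [if_pos rfl, ite_true]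
      rcases h2 (p i) with h <;> rcases h with h | h <;>
        simp only [h, Algebra.algebraMap_eq_smul_one, zero_add, add_zero,
          e11, mul_zero, zero_mul, mul_one, one_mul, sgn_zero, sgn_one,
          smul_zero, zero_smul, mul_sub, sub_zero] <;> module
    · simp only [if_pos rfl, if_neg hik, ite_true, ite_false]
      rcases h2 (p i) with h | h <;> rcases h2 (p k) with h' | h' <;>
        simp only [h, h', Algebra.algebraMap_eq_smul_one, zero_add, add_zero,
          e11, mul_zero, zero_mul, mul_one, one_mul, sgn_zero, sgn_one,
          smul_zero, zero_smul, mul_sub, sub_zero] <;> module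
  · by_cases hik : i = k
    · subst hik
      simp only [if_pos rfl, if_neg hij, ite_true, ite_false]
      rcases h2 (p i) with h | h <;> rcases h2 (p j) with h' | h' <;>
        simp only [h, h', Algebra.algebraMap_eq_smul_one, zero_add, add_zero,
          e11, mul_zero, zero_mul, mul_one, one_mul, sgn_zero, sgn_one,
          smul_zero, zero_smul, mul_sub, sub_zero] <;> module
    · simp only [if_neg hij, if_neg hik, ite_false]
      rcases h2 (p i) with h | h <;> rcases h2 (p j) with h' | h' <;>
        rcases h2 (p k) with h'' | h'' <;>
        simp only [h, h', h'', Algebra.algebraMap_eq_smul_one, zero_add, add_zero,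
          e11, mul_zero, zero_mul, mul_one, one_mul, sgn_zero, sgn_one,
          smul_zero, zero_smul, mul_sub, sub_zero] <;> module

lemma Phi_entry (x : Matrix (Fin ℓ) (Fin ℓ) ℂ) (i j : Fin (m+n)) :
    Phi m n ℓ p (TensorAlgebra.ι ℂ x) i j = tMat m n ℓ p x i j := by
  rw [Phi, TensorAlgebra.lift_ι_apply]

lemma part1 (i j : Fin (m+n)) (d : Fin ℓ) (hd : (d:ℕ)+1 < ℓ) :
    Phi m n ℓ p (TensorAlgebra.ι ℂ (Matrix.single (⟨(d : ℕ) + 1, hd⟩ : Fin ℓ) d 1)) i j -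
        (if i = j then (1 : U m n ℓ p) else 0) ∈ Ichi m n ℓ p := by
  set d1 : Fin ℓ := ⟨(d:ℕ)+1, hd⟩ with hd1
  rw [Phi_entry, tMat_std]
  have hχ : chiv m n ℓ p (i, d1) (j, d) = if i = j then sgn (p i) else 0 := by
    simp [chiv, hd1]
  have key : sgn (p i) • gen m n ℓ p (i, d1) (j, d) - (if i = j then (1 : U m n ℓ p) else 0)
      = sgn (p i) • (gen m n ℓ p (i, d1) (j, d)
          - algebraMap ℂ (U m n ℓ p) (chiv m n ℓ p (i, d1) (j, d))) := by
    rw [smul_sub, hχ]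
    congr 1
    by_cases hij : i = j <;>
      simp [hij, Algebra.algebraMap_eq_smul_one, smul_smul, sgn_mul_self]
  rw [key]
  exact csmul_mem m n ℓ p _ (gen_mem m n ℓ p _ _ (by simp [hd1]))

lemma part2 (hp : (Finset.univ.filter fun i => p i = 0).card = m)
    (i j : Fin (m+n)) (d : Fin ℓ) (hd : (d:ℕ)+1 < ℓ) :
    Phi m n ℓ p
          (TensorAlgebra.ι ℂ (Matrix.single (⟨(d : ℕ) + 1, hd⟩ : Fin ℓ) d 1) *
            TensorAlgebra.ι ℂ
              (Matrix.single (⟨(d : ℕ) + 1, hd⟩ : Fin ℓ) (⟨(d : ℕ) + 1, hd⟩ : Fin ℓ) 1)) i j +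
        ρC m n ℓ (⟨(d : ℕ) + 1, hd⟩ : Fin ℓ) •
          Phi m n ℓ p (TensorAlgebra.ι ℂ (Matrix.single (⟨(d : ℕ) + 1, hd⟩ : Fin ℓ) d 1)) i j -
        Phi m n ℓ p
          (TensorAlgebra.ι ℂ
            (Matrix.single (⟨(d : ℕ) + 1, hd⟩ : Fin ℓ) (⟨(d : ℕ) + 1, hd⟩ : Fin ℓ) 1)) i j -
        (if i = j then ρC m n ℓ d else 0) • (1 : U m n ℓ p) ∈ Ichi m n ℓ p := by
  set d1 : Fin ℓ := ⟨(d:ℕ)+1, hd⟩ with hd1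
  have hP2 : Phi m n ℓ p
      (TensorAlgebra.ι ℂ (Matrix.single d1 d 1) *
        TensorAlgebra.ι ℂ (Matrix.single d1 d1 1)) i j
      = ∑ k : Fin (m+n), (sgn (p i) • gen m n ℓ p (i, d1) (k, d)) *
          (sgn (p k) • gen m n ℓ p (k, d1) (j, d1)) := by
    rw [map_mul, Matrix.mul_apply]
    exact Finset.sum_congr rfl fun k _ => by
      rw [Phi_entry, Phi_entry, tMat_std, tMat_std]
  rw [hP2, Phi_entry, Phi_entry, tMat_std, tMat_std]
  rw [Finset.sum_congr rfl fun k _ => hk_lemma m n ℓ p i j d hd k]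
  have hmemS1 : ∑ k : Fin (m+n),
      (sgn (p i) * sgn (p k) * sgn ((p i + p k) * (p k + p j))) •
        (gen m n ℓ p (k, d1) (j, d1) *
          (gen m n ℓ p (i, d1) (k, d)
            - algebraMap ℂ (U m n ℓ p) (chiv m n ℓ p (i, d1) (k, d)))) ∈ Ichi m n ℓ p := by
    refine Submodule.sum_mem _ fun k _ => csmul_mem m n ℓ p _ ?_
    exact Ideal.mul_mem_left _ _ (gen_mem m n ℓ p _ _ (by simp [hd1]))
  by_cases hij : i = j
  · subst hij
    simp only [ite_true, if_pos rfl]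
    rw [Finset.sum_sub_distrib, Finset.sum_add_distrib, Finset.sum_sub_distrib,
      Finset.sum_ite_eq]
    simp only [Finset.mem_univ, ite_true]
    rw [← Finset.sum_smul, sum_sgn m n p hp]
    have hχ1i : chiv m n ℓ p (i, d1) (i, d) = sgn (p i) := by simp [chiv, hd1]
    have hρ : ρC m n ℓ d1 - ρC m n ℓ d = (m : ℂ) - (n : ℂ) := by
      simp only [ρC, hd1]
      push_cast
      ring
    have key :
        (∑ k : Fin (m+n),
          (sgn (p i) * sgn (p k) * sgn ((p i + p k) * (p k + p i))) •
            (gen m n ℓ p (k, d1) (i, d1) *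
              (gen m n ℓ p (i, d1) (k, d)
                - algebraMap ℂ (U m n ℓ p) (chiv m n ℓ p (i, d1) (k, d))))
          - ∑ k : Fin (m+n),
            (sgn (p i) * sgn (p k) * sgn ((p i + p k) * (p k + p i))) •
              (gen m n ℓ p (k, d1) (k, d)
                - algebraMap ℂ (U m n ℓ p) (chiv m n ℓ p (k, d1) (k, d)))
          + sgn (p i) • gen m n ℓ p (i, d1) (i, d1)
          - ((m : ℂ) - (n : ℂ)) • (1 : U m n ℓ p))
        + ρC m n ℓ d1 • (sgn (p i) • gen m n ℓ p (i, d1) (i, d))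
        - sgn (p i) • gen m n ℓ p (i, d1) (i, d1)
        - ρC m n ℓ d • (1 : U m n ℓ p)
        = (∑ k : Fin (m+n),
            (sgn (p i) * sgn (p k) * sgn ((p i + p k) * (p k + p i))) •
              (gen m n ℓ p (k, d1) (i, d1) *
                (gen m n ℓ p (i, d1) (k, d)
                  - algebraMap ℂ (U m n ℓ p) (chiv m n ℓ p (i, d1) (k, d)))))
          - (∑ k : Fin (m+n),
            (sgn (p i) * sgn (p k) * sgn ((p i + p k) * (p k + p i))) •
              (gen m n ℓ p (k, d1) (k, d)
                - algebraMap ℂ (U m n ℓ p) (chiv m n ℓ p (k, d1) (k, d))))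
          + (ρC m n ℓ d1 * sgn (p i)) •
              (gen m n ℓ p (i, d1) (i, d)
                - algebraMap ℂ (U m n ℓ p) (chiv m n ℓ p (i, d1) (i, d))) := by
      have hA : (ρC m n ℓ d1 * sgn (p i)) •
          (algebraMap ℂ (U m n ℓ p) (chiv m n ℓ p (i, d1) (i, d)))
          = ρC m n ℓ d1 • (1 : U m n ℓ p) := by
        rw [hχ1i, Algebra.algebraMap_eq_smul_one, smul_smul, mul_assoc,
          sgn_mul_self, mul_one]
      rw [smul_sub, hA, ← hρ]
      module
    simp only [← hd1]
    rw [key]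
    refine Submodule.add_mem _ (Submodule.sub_mem _ hmemS1 ?_) ?_
    · refine Submodule.sum_mem _ fun k _ => csmul_mem m n ℓ p _ ?_
      exact gen_mem m n ℓ p _ _ (by simp [hd1])
    · exact csmul_mem m n ℓ p _ (gen_mem m n ℓ p _ _ (by simp [hd1]))
  · simp only [if_neg hij, ite_false]
    rw [Finset.sum_sub_distrib, Finset.sum_add_distrib, Finset.sum_sub_distrib,
      Finset.sum_ite_eq]
    simp only [Finset.mem_univ, ite_true, Finset.sum_const_zero, sub_zero, zero_smul]
    have hχ1j : chiv m n ℓ p (i, d1) (j, d) = 0 := by simp [chiv, hd1, hij]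
    have key :
        (∑ k : Fin (m+n),
          (sgn (p i) * sgn (p k) * sgn ((p i + p k) * (p k + p j))) •
            (gen m n ℓ p (k, d1) (j, d1) *
              (gen m n ℓ p (i, d1) (k, d)
                - algebraMap ℂ (U m n ℓ p) (chiv m n ℓ p (i, d1) (k, d))))
          + sgn (p i) • gen m n ℓ p (i, d1) (j, d1))
        + ρC m n ℓ d1 • (sgn (p i) • gen m n ℓ p (i, d1) (j, d))
        - sgn (p i) • gen m n ℓ p (i, d1) (j, d1)
        = (∑ k : Fin (m+n),
            (sgn (p i) * sgn (p k) * sgn ((p i + p k) * (p k + p j))) •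
              (gen m n ℓ p (k, d1) (j, d1) *
                (gen m n ℓ p (i, d1) (k, d)
                  - algebraMap ℂ (U m n ℓ p) (chiv m n ℓ p (i, d1) (k, d)))))
          + (ρC m n ℓ d1 * sgn (p i)) •
              (gen m n ℓ p (i, d1) (j, d)
                - algebraMap ℂ (U m n ℓ p) (chiv m n ℓ p (i, d1) (j, d))) := by
      rw [smul_sub, hχ1j, map_zero, smul_zero, sub_zero]
      module
    simp only [← hd1]
    rw [key]
    refine Submodule.add_mem _ hmemS1 ?_
    exact csmul_mem m n ℓ p _ (gen_mem m n ℓ p _ _ (by simp [hd1]))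

/-- for `1 ≤ c ≤ ℓ-1` (we write `d` for the 0-based column `c-1`,
so `e_{c+1,c}` is the matrix unit `stdBasisMatrix d1 d 1` with `d1 = d+1`) both
(i) `t_{ij}(e_{c+1,c}) - δ_{ij}` and
(ii) `t_{ij}(e_{c+1,c} ⊗ e_{c+1,c+1}) + ρ_{c+1} t_{ij}(e_{c+1,c}) - t_{ij}(e_{c+1,c+1}) - δ_{ij} ρ_c`
lie in the left ideal `I_χ`; equivalently
`t_{ij}(e_{c+1,c}(u + e_{c+1,c+1} + ρ_{c+1})) ≡ t_{ij}(u + e_{c+1,c+1} + ρ_c)`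
modulo `I_χ[u]`. -/
theorem stmt4 (m n ℓ : ℕ) (hℓ : 0 < ℓ) (hmn : 0 < m + n)
    (p : Fin (m + n) → ZMod 2)
    (hp : (Finset.univ.filter fun i => p i = 0).card = m)
    (i j : Fin (m + n)) (d : Fin ℓ) (hd : (d : ℕ) + 1 < ℓ) :
    (Phi m n ℓ p (TensorAlgebra.ι ℂ (Matrix.single (⟨(d : ℕ) + 1, hd⟩ : Fin ℓ) d 1)) i j -
        (if i = j then (1 : U m n ℓ p) else 0) ∈ Ichi m n ℓ p) ∧
    (Phi m n ℓ p
          (TensorAlgebra.ι ℂ (Matrix.single (⟨(d : ℕ) + 1, hd⟩ : Fin ℓ) d 1) *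
            TensorAlgebra.ι ℂ
              (Matrix.single (⟨(d : ℕ) + 1, hd⟩ : Fin ℓ) (⟨(d : ℕ) + 1, hd⟩ : Fin ℓ) 1)) i j +
        ρC m n ℓ (⟨(d : ℕ) + 1, hd⟩ : Fin ℓ) •
          Phi m n ℓ p (TensorAlgebra.ι ℂ (Matrix.single (⟨(d : ℕ) + 1, hd⟩ : Fin ℓ) d 1)) i j -
        Phi m n ℓ p
          (TensorAlgebra.ι ℂ
            (Matrix.single (⟨(d : ℕ) + 1, hd⟩ : Fin ℓ) (⟨(d : ℕ) + 1, hd⟩ : Fin ℓ) 1)) i j -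
        (if i = j then ρC m n ℓ d else 0) • (1 : U m n ℓ p) ∈ Ichi m n ℓ p) := by
  exact ⟨part1 m n ℓ p i j d hd, part2 m n ℓ p hp i j d hd⟩

end
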